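/- arXiv:2210.06017 — 5 statements merged into one kernel-verified Lean document; each statement's English description precedes it below -/
import Mathlib

section
/- Let S be a monoid, T a submonoid of S, and d an element of S that commutes with every element of T (d * t = t * d for all t ∈ T). Suppose S is generated by T together with d, i.e., Submonoid.closure (↑T ∪ {d}) = ⊤. Then every balanced identity satisfied by the monoid T holds in S as well: for every type X and all words w, w' ∈ FreeMonoid X such that the identity w ≍ w' is balanced and is satisfied by T, the identity w ≍ w' is satisfied by S. -/
/-- A monoid `S` satisfies the identity `w ≍ w'` if every monoid homomorphism
from the free monoid into `S` equalizes `w` and `w'`. -/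
def SatisfiesId (S : Type*) [Monoid S] {X : Type*} (w w' : FreeMonoid X) : Prop :=
  ∀ φ : FreeMonoid X →* S, φ w = φ w'

/-- The identity `w ≍ w'` is balanced if every letter occurs the same number of
times in `w` and in `w'`. -/
def BalancedId {X : Type*} [DecidableEq X] (w w' : FreeMonoid X) : Prop :=
  ∀ x : X, (FreeMonoid.toList w).count x = (FreeMonoid.toList w').count x

/-- If `S` is generated by a submonoid `T` together with an element `d` commuting
with every element of `T`, then every balanced identity satisfied by `T` holds in `S`. -/
theorem balanced_identities_lift {S : Type*} [Monoid S] (T : Submonoid S) (d : S)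
    (hcomm : ∀ t ∈ T, d * t = t * d)
    (hgen : Submonoid.closure ((T : Set S) ∪ {d}) = ⊤)
    {X : Type*} [DecidableEq X] (w w' : FreeMonoid X)
    (hbal : BalancedId w w')
    (hT : SatisfiesId T w w') :
    SatisfiesId S w w' := by
  -- d^k commutes with elements of T
  have hcomm' : ∀ (k : ℕ), ∀ t ∈ T, d ^ k * t = t * d ^ k := by
    intro k t ht
    exact Commute.pow_left (hcomm t ht) k
  -- every element of S is t * d^n
  have hdecomp : ∀ s : S, ∃ t : T, ∃ n : ℕ, s = (t : S) * d ^ n := by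
    intro s
    have hs : s ∈ Submonoid.closure ((T : Set S) ∪ {d}) := by
      rw [hgen]; trivial
    induction hs using Submonoid.closure_induction with
    | mem x hx =>
      rcases hx with hx | hx
      · exact ⟨⟨x, hx⟩, 0, by simp⟩
      · exact ⟨1, 1, by simp [Set.mem_singleton_iff.mp hx]⟩
    | one => exact ⟨1, 0, by simp⟩
    | mul a b _ _ ha hb =>
      rcases ha with ⟨t₁, n₁, rfl⟩
      rcases hb with ⟨t₂, n₂, rfl⟩
      refine ⟨t₁ * t₂, n₁ + n₂, ?_⟩
      push_cast
      rw [pow_add, mul_assoc, ← mul_assoc (d ^ n₁), hcomm' n₁ t₂ t₂.2]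
      rw [mul_assoc, mul_assoc]
  intro φ
  choose t n ht using fun x => hdecomp (φ (FreeMonoid.of x))
  set ψ : FreeMonoid X →* T := FreeMonoid.lift t with hψ
  have key : ∀ l : List X,
      φ (FreeMonoid.ofList l) = (ψ (FreeMonoid.ofList l) : S) * d ^ (l.map n).sum := by
    intro l
    induction l with
    | nil => simp
    | cons x l ih =>
      have : FreeMonoid.ofList (x :: l) = FreeMonoid.of x * FreeMonoid.ofList l := rfl
      rw [this, map_mul, map_mul, ih, ht x]
      push_cast
      rw [List.map_cons, List.sum_cons, pow_add]
      have := hcomm' (n x) (ψ (FreeMonoid.ofList l)) (ψ (FreeMonoid.ofList l)).2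
      rw [mul_assoc, ← mul_assoc (d ^ n x), this, mul_assoc, mul_assoc,
        show ψ (FreeMonoid.of x) = t x from FreeMonoid.lift_eval_of t x]
  have hperm : w.toList.Perm w'.toList := List.perm_iff_count.mpr hbal
  have hsum : (w.toList.map n).sum = (w'.toList.map n).sum :=
    (hperm.map n).sum_eq
  have hw : FreeMonoid.ofList w.toList = w := rfl
  have hw' : FreeMonoid.ofList w'.toList = w' := rfl
  calc φ w = (ψ w : S) * d ^ (w.toList.map n).sum := by rw [← hw]; exact key w.toList
    _ = (ψ w' : S) * d ^ (w'.toList.map n).sum := by rw [hT ψ, hsum]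
    _ = φ w' := by rw [← hw']; exact (key w'.toList).symm
end

section
/- Let S be a monoid, T a submonoid of S, and d an element of S that commutes with every element of T, and suppose S is generated by T together with d, i.e., Submonoid.closure (↑T ∪ {d}) = ⊤. If T contains an element t of infinite order (the map n ↦ t^n from ℕ to T is injective, so ⟨t⟩ is an infinite cyclic submonoid), then T and S are equationally equivalent. -/
lemma lift_ofList_eq {M : Type*} [Monoid M] {X : Type*} (f : X → M) (l : List X) :
    FreeMonoid.lift f (FreeMonoid.ofList l) = (l.map f).prod := by
  induction l with
  | nil => simp
  | cons a l ih =>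
      rw [show FreeMonoid.ofList (a :: l) = FreeMonoid.of a * FreeMonoid.ofList l from rfl]
      simp [ih]

/-- If `S` is generated by a submonoid `T` together with an element `d` commuting
with every element of `T`, and `T` contains an element of infinite order, then
`T` and `S` are equationally equivalent. -/
theorem equationally_equivalent_of_localization {S : Type*} [Monoid S] (T : Submonoid S) (d : S)
    (hcomm : ∀ t ∈ T, d * t = t * d)
    (hgen : Submonoid.closure ((T : Set S) ∪ {d}) = ⊤)
    (t : T) (ht : Function.Injective fun n : ℕ => t ^ n) :
    ∀ (X : Type*) (w w' : FreeMonoid X),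
      SatisfiesId T w w' ↔ SatisfiesId S w w' := by
  -- d^n commutes with every element of T
  have hc : ∀ (u : S), u ∈ T → ∀ n : ℕ, d ^ n * u = u * d ^ n := by
    intro u hu n
    exact ((Commute.pow_left (hcomm u hu) n)).eq
  -- every element of S decomposes as u * d^n with u ∈ T
  have hdecomp : ∀ s : S, ∃ (u : T) (n : ℕ), s = (u : S) * d ^ n := by
    intro s
    have hs : s ∈ Submonoid.closure ((T : Set S) ∪ {d}) := by rw [hgen]; trivial
    induction hs using Submonoid.closure_induction with
    | mem x hx =>
        rcases hx with hx | hx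
        · exact ⟨⟨x, hx⟩, 0, by simp⟩
        · exact ⟨1, 1, by simp [Set.mem_singleton_iff.mp hx]⟩
    | one => exact ⟨1, 0, by simp⟩
    | mul x y _ _ hx hy =>
        rcases hx with ⟨u, n, rfl⟩
        rcases hy with ⟨v, m, rfl⟩
        refine ⟨u * v, n + m, ?_⟩
        have := hc (v : S) v.2 n
        push_cast
        rw [pow_add, mul_assoc, ← mul_assoc (d ^ n), this, mul_assoc, mul_assoc]
  intro X w w'
  constructor
  · -- T satisfies ⇒ S satisfies
    intro hT ψ
    -- decompose generators
    choose tf nf hf using fun x : X => hdecomp (ψ (FreeMonoid.of x))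
    -- key: ψ w = φT w * d ^ (sum of nf over w)
    have key : ∀ l : List X,
        ψ (FreeMonoid.ofList l) =
          (FreeMonoid.lift tf (FreeMonoid.ofList l) : S) * d ^ (l.map nf).sum := by
      intro l
      induction l with
      | nil => simp
      | cons a l ih =>
          rw [show FreeMonoid.ofList (a :: l) = FreeMonoid.of a * FreeMonoid.ofList l from rfl]
          rw [map_mul, ih, hf a, map_mul, FreeMonoid.lift_eval_of]
          have h1 : d ^ nf a * (FreeMonoid.lift tf (FreeMonoid.ofList l) : S)
              = (FreeMonoid.lift tf (FreeMonoid.ofList l) : S) * d ^ nf a :=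
            hc _ (FreeMonoid.lift tf (FreeMonoid.ofList l)).2 _
          push_cast
          rw [List.map_cons, List.sum_cons, pow_add, mul_assoc, ← mul_assoc (d ^ nf a),
            h1, mul_assoc, mul_assoc]
    have hw : w = FreeMonoid.ofList w.toList := rfl
    have hw' : w' = FreeMonoid.ofList w'.toList := rfl
    have hφT : FreeMonoid.lift tf w = FreeMonoid.lift tf w' := hT _
    -- sums of nf agree, using the infinite-order element t
    have hsum : (w.toList.map nf).sum = (w'.toList.map nf).sum := by
      have := hT (FreeMonoid.lift fun x => t ^ nf x)
      have hl : ∀ l : List X, FreeMonoid.lift (fun x => t ^ nf x) (FreeMonoid.ofList l)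
          = t ^ (l.map nf).sum := by
        intro l
        induction l with
        | nil => simp
        | cons a l ih =>
            rw [show FreeMonoid.ofList (a :: l) = FreeMonoid.of a * FreeMonoid.ofList l from rfl]
            rw [map_mul, ih, FreeMonoid.lift_eval_of, List.map_cons, List.sum_cons, pow_add]
      apply ht
      have h1 := hl w.toList
      have h2 := hl w'.toList
      rw [FreeMonoid.ofList_toList] at h1 h2
      rw [h1, h2] at this
      exact this
    calc ψ w = (FreeMonoid.lift tf w : S) * d ^ (w.toList.map nf).sum := key w.toList
      _ = (FreeMonoid.lift tf w' : S) * d ^ (w'.toList.map nf).sum := by rw [hφT, hsum]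
      _ = ψ w' := (key w'.toList).symm
  · -- S satisfies ⇒ T satisfies
    intro hS φ
    have := hS (T.subtype.comp φ)
    exact Subtype.ext this
end

section
/- Let z denote the element of the plactic monoid M represented by the word cba. Then z is cancellable in M: for all w, v ∈ M, if z * w = z * v then w = v. -/
namespace Plactic

/-- The generator `a`. -/
def a : FreeMonoid (Fin 3) := FreeMonoid.of 0
/-- The generator `b`. -/
def b : FreeMonoid (Fin 3) := FreeMonoid.of 1
/-- The generator `c`. -/
def c : FreeMonoid (Fin 3) := FreeMonoid.of 2

/-- The eight Knuth relations on three generators. -/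
inductive KnuthRel : FreeMonoid (Fin 3) → FreeMonoid (Fin 3) → Prop
  | aba : KnuthRel (a * b * a) (b * a * a)
  | bab : KnuthRel (b * a * b) (b * b * a)
  | aca : KnuthRel (a * c * a) (c * a * a)
  | cac : KnuthRel (c * a * c) (c * c * a)
  | cbb : KnuthRel (c * b * b) (b * c * b)
  | cbc : KnuthRel (c * b * c) (c * c * b)
  | bac : KnuthRel (b * a * c) (b * c * a)
  | acb : KnuthRel (a * c * b) (c * a * b)

/-- The plactic congruence: the congruence generated by the Knuth relations. -/
def placticCon : Con (FreeMonoid (Fin 3)) := conGen KnuthRel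

/-- The plactic monoid with three generators. -/
abbrev M := placticCon.Quotient

/-- The natural projection from the free monoid onto the plactic monoid. -/
def mk : FreeMonoid (Fin 3) →* M := placticCon.mk'

/-- The congruence on `M` generated by the pair `(ac, ca)`. -/
def con1 : Con M := conGen (fun x y => x = mk (a * c) ∧ y = mk (c * a))

/-- `N1 = M/(ac = ca)`. -/
abbrev N1 := con1.Quotient

/-- The congruence on `M` generated by the pair `(bacb, cbab)`. -/
def con2 : Con M := conGen (fun x y => x = mk (b * a * c * b) ∧ y = mk (c * b * a * b))

/-- The grammic monoid `N2 = M/(bacb = cbab)`. -/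
abbrev N2 := con2.Quotient

/-! ### Auxiliary development: rank-3 tableaux and Schensted insertion -/

/-- A (not necessarily valid) rank-3 tableau datum: row 1 is `a^p b^q c^r`,
row 2 is `b^s c^t`, row 3 is `c^u`. -/
structure Tab where
  p : ℕ
  q : ℕ
  r : ℕ
  s : ℕ
  t : ℕ
  u : ℕ

/-- Insertion of the letter `a`. -/
def insA : Tab → Tab
  | ⟨p, q+1, r, s, t+1, u⟩ => ⟨p+1, q, r, s+1, t, u+1⟩
  | ⟨p, q+1, r, s, 0, u⟩ => ⟨p+1, q, r, s+1, 0, u⟩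
  | ⟨p, 0, r+1, s, t, u⟩ => ⟨p+1, 0, r, s, t+1, u⟩
  | ⟨p, 0, 0, s, t, u⟩ => ⟨p+1, 0, 0, s, t, u⟩

/-- Insertion of the letter `b`. -/
def insB : Tab → Tab
  | ⟨p, q, r+1, s, t, u⟩ => ⟨p, q+1, r, s, t+1, u⟩
  | ⟨p, q, 0, s, t, u⟩ => ⟨p, q+1, 0, s, t, u⟩

/-- Insertion of the letter `c`. -/
def insC : Tab → Tab
  | ⟨p, q, r, s, t, u⟩ => ⟨p, q, r+1, s, t, u⟩

/-- Insertion of a letter. -/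
def insL (T : Tab) (x : Fin 3) : Tab :=
  match x with
  | ⟨0, _⟩ => insA T
  | ⟨1, _⟩ => insB T
  | ⟨_+2, _⟩ => insC T

/-- Insertion of a word (left to right). -/
def insW (T : Tab) (l : List (Fin 3)) : Tab := l.foldl insL T

lemma insW_append (T : Tab) (l l' : List (Fin 3)) :
    insW T (l ++ l') = insW (insW T l) l' := by
  simp only [insW, List.foldl_append]

lemma insL0 (T : Tab) : insL T 0 = insA T := rfl
lemma insL1 (T : Tab) : insL T 1 = insB T := rfl
lemma insL2 (T : Tab) : insL T 2 = insC T := rfl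

/-- Insertion is invariant under the Knuth relations. -/
lemma ins_congr {x y : FreeMonoid (Fin 3)} (h : placticCon x y) :
    ∀ T : Tab, insW T x.toList = insW T y.toList := by
  replace h : ConGen.Rel KnuthRel x y := h
  induction h with
  | of x y hxy =>
    intro T
    obtain ⟨p, q, r, s, t, u⟩ := T
    cases hxy <;>
      rcases q with _ | (_ | (_ | q)) <;> rcases r with _ | (_ | (_ | r)) <;>
        rcases t with _ | (_ | (_ | t)) <;> rfl
  | refl _ => intro _; rfl
  | symm _ ih => intro T; exact (ih T).symm
  | trans _ _ ih₁ ih₂ => intro T; exact (ih₁ T).trans (ih₂ T)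
  | mul _ _ ih₁ ih₂ =>
    intro T
    simp only [FreeMonoid.toList_mul, insW_append, ih₁, ih₂]

/-! ### The plactic congruence on lists -/

/-- The plactic congruence, viewed as a relation on lists. -/
def Q (l₁ l₂ : List (Fin 3)) : Prop :=
  placticCon (FreeMonoid.ofList l₁) (FreeMonoid.ofList l₂)

lemma Q.refl (l : List (Fin 3)) : Q l l := placticCon.refl _

lemma Q.symm {l₁ l₂} (h : Q l₁ l₂) : Q l₂ l₁ := placticCon.symm h

lemma Q.trans {l₁ l₂ l₃} (h : Q l₁ l₂) (h' : Q l₂ l₃) : Q l₁ l₃ := placticCon.trans h h'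

instance : Trans Q Q Q := ⟨Q.trans⟩

lemma Q.of_eq {l₁ l₂ : List (Fin 3)} (h : l₁ = l₂) : Q l₁ l₂ := h ▸ Q.refl _

lemma Q.app {l₁ l₂ m₁ m₂} (h : Q l₁ l₂) (h' : Q m₁ m₂) : Q (l₁ ++ m₁) (l₂ ++ m₂) :=
  placticCon.mul h h'

lemma Q.appL (u : List (Fin 3)) {m₁ m₂} (h : Q m₁ m₂) : Q (u ++ m₁) (u ++ m₂) :=
  (Q.refl u).app h

lemma Q.appR {l₁ l₂} (h : Q l₁ l₂) (v : List (Fin 3)) : Q (l₁ ++ v) (l₂ ++ v) :=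
  h.app (Q.refl v)

lemma kn {x y} (h : KnuthRel x y) : placticCon x y := ConGen.Rel.of _ _ h

lemma q_aba : Q [0,1,0] [1,0,0] := kn KnuthRel.aba
lemma q_bab : Q [1,0,1] [1,1,0] := kn KnuthRel.bab
lemma q_aca : Q [0,2,0] [2,0,0] := kn KnuthRel.aca
lemma q_cac : Q [2,0,2] [2,2,0] := kn KnuthRel.cac
lemma q_cbb : Q [2,1,1] [1,2,1] := kn KnuthRel.cbb
lemma q_cbc : Q [2,1,2] [2,2,1] := kn KnuthRel.cbc
lemma q_bac : Q [1,0,2] [1,2,0] := kn KnuthRel.bac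
lemma q_acb : Q [0,2,1] [2,0,1] := kn KnuthRel.acb

/-- `replicate`, argument-flipped. -/
def rep (x : Fin 3) (n : ℕ) : List (Fin 3) := List.replicate n x

local infix:50 " =Q " => Q

lemma qA : ∀ r, Q (rep 2 (r+1) ++ [0]) ([2,0] ++ rep 2 r) := by
  intro r
  induction r with
  | zero => exact Q.refl [2,0]
  | succ n ih =>
    calc rep 2 (n+2) ++ [0]
        = [2] ++ (rep 2 (n+1) ++ [0]) := by simp [rep, List.replicate_succ]
      _ =Q [2] ++ ([2,0] ++ rep 2 n) := Q.appL [2] ih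
      _ = [2,2,0] ++ rep 2 n := by simp
      _ =Q [2,0,2] ++ rep 2 n := Q.appR q_cac.symm _
      _ = [2,0] ++ rep 2 (n+1) := by simp [rep, List.replicate_succ]

lemma qB : ∀ p, Q (rep 0 p ++ [2,0]) ([2] ++ rep 0 (p+1)) := by
  intro p
  induction p with
  | zero => exact Q.refl [2,0]
  | succ n ih =>
    calc rep 0 (n+1) ++ [2,0]
        = [0] ++ (rep 0 n ++ [2,0]) := by simp [rep, List.replicate_succ]
      _ =Q [0] ++ ([2] ++ rep 0 (n+1)) := Q.appL [0] ih
      _ = [0,2,0] ++ rep 0 n := by simp [rep, List.replicate_succ]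
      _ =Q [2,0,0] ++ rep 0 n := Q.appR q_aca _
      _ = [2] ++ rep 0 (n+2) := by simp [rep, List.replicate_succ]

lemma qC : ∀ r, Q (rep 2 (r+1) ++ [1]) ([2,1] ++ rep 2 r) := by
  intro r
  induction r with
  | zero => exact Q.refl [2,1]
  | succ n ih =>
    calc rep 2 (n+2) ++ [1]
        = [2] ++ (rep 2 (n+1) ++ [1]) := by simp [rep, List.replicate_succ]
      _ =Q [2] ++ ([2,1] ++ rep 2 n) := Q.appL [2] ih
      _ = [2,2,1] ++ rep 2 n := by simp
      _ =Q [2,1,2] ++ rep 2 n := Q.appR q_cbc.symm _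
      _ = [2,1] ++ rep 2 (n+1) := by simp [rep, List.replicate_succ]

lemma qD : ∀ q, Q (rep 1 q ++ [2,1]) ([2] ++ rep 1 (q+1)) := by
  intro p
  induction p with
  | zero => exact Q.refl [2,1]
  | succ n ih =>
    calc rep 1 (n+1) ++ [2,1]
        = [1] ++ (rep 1 n ++ [2,1]) := by simp [rep, List.replicate_succ]
      _ =Q [1] ++ ([2] ++ rep 1 (n+1)) := Q.appL [1] ih
      _ = [1,2,1] ++ rep 1 n := by simp [rep, List.replicate_succ]
      _ =Q [2,1,1] ++ rep 1 n := Q.appR q_cbb.symm _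
      _ = [2] ++ rep 1 (n+2) := by simp [rep, List.replicate_succ]

lemma qE : ∀ p, Q (rep 0 p ++ [2,1]) ([2] ++ (rep 0 p ++ [1])) := by
  intro p
  induction p with
  | zero => exact Q.refl [2,1]
  | succ n ih =>
    have step : Q ([0] ++ ([2] ++ (rep 0 n ++ [1]))) ([2] ++ (rep 0 (n+1) ++ [1])) := by
      cases n with
      | zero => exact q_acb
      | succ m =>
        calc [0] ++ ([2] ++ (rep 0 (m+1) ++ [1]))
            = [0,2,0] ++ (rep 0 m ++ [1]) := by simp [rep, List.replicate_succ]
          _ =Q [2,0,0] ++ (rep 0 m ++ [1]) := Q.appR q_aca _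
          _ = [2] ++ (rep 0 (m+2) ++ [1]) := by simp [rep, List.replicate_succ]
    calc rep 0 (n+1) ++ [2,1]
        = [0] ++ (rep 0 n ++ [2,1]) := by simp [rep, List.replicate_succ]
      _ =Q [0] ++ ([2] ++ (rep 0 n ++ [1])) := Q.appL [0] ih
      _ =Q [2] ++ (rep 0 (n+1) ++ [1]) := step

lemma qF : ∀ q, Q (rep 1 (q+1) ++ [0]) ([1,0] ++ rep 1 q) := by
  intro q
  induction q with
  | zero => exact Q.refl [1,0]
  | succ n ih =>
    calc rep 1 (n+2) ++ [0]
        = [1] ++ (rep 1 (n+1) ++ [0]) := by simp [rep, List.replicate_succ]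
      _ =Q [1] ++ ([1,0] ++ rep 1 n) := Q.appL [1] ih
      _ = [1,1,0] ++ rep 1 n := by simp
      _ =Q [1,0,1] ++ rep 1 n := Q.appR q_bab.symm _
      _ = [1,0] ++ rep 1 (n+1) := by simp [rep, List.replicate_succ]

lemma qG : ∀ p, Q (rep 0 p ++ [1,0]) ([1] ++ rep 0 (p+1)) := by
  intro p
  induction p with
  | zero => exact Q.refl [1,0]
  | succ n ih =>
    calc rep 0 (n+1) ++ [1,0]
        = [0] ++ (rep 0 n ++ [1,0]) := by simp [rep, List.replicate_succ]
      _ =Q [0] ++ ([1] ++ rep 0 (n+1)) := Q.appL [0] ih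
      _ = [0,1,0] ++ rep 0 n := by simp [rep, List.replicate_succ]
      _ =Q [1,0,0] ++ rep 0 n := Q.appR q_aba _
      _ = [1] ++ rep 0 (n+2) := by simp [rep, List.replicate_succ]

lemma qI : ∀ r, Q ([1] ++ (rep 2 r ++ [0])) ([1,0] ++ rep 2 r) := by
  intro r
  cases r with
  | zero => exact Q.refl [1,0]
  | succ n =>
    calc [1] ++ (rep 2 (n+1) ++ [0])
        =Q [1] ++ ([2,0] ++ rep 2 n) := Q.appL [1] (qA n)
      _ = [1,2,0] ++ rep 2 n := by simp
      _ =Q [1,0,2] ++ rep 2 n := Q.appR q_bac.symm _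
      _ = [1,0] ++ rep 2 (n+1) := by simp [rep, List.replicate_succ]
lemma qL1 (p q r : ℕ) :
    Q ((rep 0 p ++ (rep 1 q ++ rep 2 (r+1))) ++ [1])
      ([2] ++ (rep 0 p ++ (rep 1 (q+1) ++ rep 2 r))) := by
  calc (rep 0 p ++ (rep 1 q ++ rep 2 (r+1))) ++ [1]
      = (rep 0 p ++ rep 1 q) ++ (rep 2 (r+1) ++ [1]) := by simp
    _ =Q (rep 0 p ++ rep 1 q) ++ ([2,1] ++ rep 2 r) := Q.appL _ (qC r)
    _ = rep 0 p ++ ((rep 1 q ++ [2,1]) ++ rep 2 r) := by simp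
    _ =Q rep 0 p ++ (([2] ++ rep 1 (q+1)) ++ rep 2 r) := Q.appL _ (Q.appR (qD q) _)
    _ = (rep 0 p ++ [2,1]) ++ (rep 1 q ++ rep 2 r) := by simp [rep, List.replicate_succ]
    _ =Q ([2] ++ (rep 0 p ++ [1])) ++ (rep 1 q ++ rep 2 r) := Q.appR (qE p) _
    _ = [2] ++ (rep 0 p ++ (rep 1 (q+1) ++ rep 2 r)) := by simp [rep, List.replicate_succ]

lemma qL2 (p r : ℕ) :
    Q ((rep 0 p ++ rep 2 (r+1)) ++ [0]) ([2] ++ (rep 0 (p+1) ++ rep 2 r)) := by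
  calc (rep 0 p ++ rep 2 (r+1)) ++ [0]
      = rep 0 p ++ (rep 2 (r+1) ++ [0]) := by simp
    _ =Q rep 0 p ++ ([2,0] ++ rep 2 r) := Q.appL _ (qA r)
    _ = (rep 0 p ++ [2,0]) ++ rep 2 r := by simp
    _ =Q ([2] ++ rep 0 (p+1)) ++ rep 2 r := Q.appR (qB p) _
    _ = [2] ++ (rep 0 (p+1) ++ rep 2 r) := by simp

lemma qL3 (p q r : ℕ) :
    Q ((rep 0 p ++ (rep 1 (q+1) ++ rep 2 r)) ++ [0])
      ([1] ++ (rep 0 (p+1) ++ (rep 1 q ++ rep 2 r))) := by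
  calc (rep 0 p ++ (rep 1 (q+1) ++ rep 2 r)) ++ [0]
      = (rep 0 p ++ rep 1 q) ++ ([1] ++ (rep 2 r ++ [0])) := by
        simp [rep, List.replicate_succ']
    _ =Q (rep 0 p ++ rep 1 q) ++ ([1,0] ++ rep 2 r) := Q.appL _ (qI r)
    _ = rep 0 p ++ ((rep 1 (q+1) ++ [0]) ++ rep 2 r) := by
        simp [rep, List.replicate_succ']
    _ =Q rep 0 p ++ (([1,0] ++ rep 1 q) ++ rep 2 r) := Q.appL _ (Q.appR (qF q) _)
    _ = (rep 0 p ++ [1,0]) ++ (rep 1 q ++ rep 2 r) := by simp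
    _ =Q ([1] ++ rep 0 (p+1)) ++ (rep 1 q ++ rep 2 r) := Q.appR (qG p) _
    _ = [1] ++ (rep 0 (p+1) ++ (rep 1 q ++ rep 2 r)) := by simp

/-- The reading word of a tableau (row 3, then row 2, then row 1). -/
def RL (T : Tab) : List (Fin 3) :=
  rep 2 T.u ++ rep 1 T.s ++ rep 2 T.t ++ rep 0 T.p ++ rep 1 T.q ++ rep 2 T.r

/-- One-step compatibility: appending a letter to the reading word is congruent to
the reading word of the tableau after insertion. -/
lemma q_step (T : Tab) (x : Fin 3) : Q (RL T ++ [x]) (RL (insL T x)) := by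
  obtain ⟨p, q, r, s, t, u⟩ := T
  rcases x with ⟨_ | (_ | (_ | xv)), hx⟩
  · -- x = 0 (a)
    rw [show ∀ T h, insL T ⟨0, h⟩ = insA T from fun _ _ => rfl]
    rcases q with _ | q
    · rcases r with _ | r
      · -- append a
        apply Q.of_eq
        simp [RL, insA, rep, List.replicate_succ']
      · -- bump c from row 1
        calc RL ⟨p, 0, r+1, s, t, u⟩ ++ [0]
            = (rep 2 u ++ rep 1 s ++ rep 2 t) ++ ((rep 0 p ++ rep 2 (r+1)) ++ [0]) := by
              simp [RL, rep]
          _ =Q (rep 2 u ++ rep 1 s ++ rep 2 t) ++ ([2] ++ (rep 0 (p+1) ++ rep 2 r)) :=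
              Q.appL _ (qL2 p r)
          _ = RL (insA ⟨p, 0, r+1, s, t, u⟩) := by
              simp [RL, insA, rep, List.replicate_succ']
    · -- bump b from row 1
      rcases t with _ | t
      · calc RL ⟨p, q+1, r, s, 0, u⟩ ++ [0]
            = (rep 2 u ++ rep 1 s) ++ ((rep 0 p ++ (rep 1 (q+1) ++ rep 2 r)) ++ [0]) := by
              simp [RL, rep]
          _ =Q (rep 2 u ++ rep 1 s) ++ ([1] ++ (rep 0 (p+1) ++ (rep 1 q ++ rep 2 r))) :=
              Q.appL _ (qL3 p q r)
          _ = RL (insA ⟨p, q+1, r, s, 0, u⟩) := by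
              simp [RL, insA, rep, List.replicate_succ']
      · calc RL ⟨p, q+1, r, s, t+1, u⟩ ++ [0]
            = (rep 2 u ++ rep 1 s ++ rep 2 (t+1)) ++
                ((rep 0 p ++ (rep 1 (q+1) ++ rep 2 r)) ++ [0]) := by simp [RL, rep]
          _ =Q (rep 2 u ++ rep 1 s ++ rep 2 (t+1)) ++
                ([1] ++ (rep 0 (p+1) ++ (rep 1 q ++ rep 2 r))) := Q.appL _ (qL3 p q r)
          _ = rep 2 u ++ (((rep 0 0 ++ (rep 1 s ++ rep 2 (t+1))) ++ [1]) ++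
                (rep 0 (p+1) ++ (rep 1 q ++ rep 2 r))) := by simp [rep]
          _ =Q rep 2 u ++ (([2] ++ (rep 0 0 ++ (rep 1 (s+1) ++ rep 2 t))) ++
                (rep 0 (p+1) ++ (rep 1 q ++ rep 2 r))) := Q.appL _ (Q.appR (qL1 0 s t) _)
          _ = RL (insA ⟨p, q+1, r, s, t+1, u⟩) := by
              simp [RL, insA, rep, List.replicate_succ']
  · -- x = 1 (b)
    rw [show ∀ T h, insL T ⟨1, h⟩ = insB T from fun _ _ => rfl]
    rcases r with _ | r
    · apply (show ∀ {l₁ l₂}, l₁ = l₂ → Q l₁ l₂ from fun h => h ▸ Q.refl _)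
      simp [RL, insB, rep, List.replicate_succ']
    · calc RL ⟨p, q, r+1, s, t, u⟩ ++ [1]
          = (rep 2 u ++ rep 1 s ++ rep 2 t) ++
              ((rep 0 p ++ (rep 1 q ++ rep 2 (r+1))) ++ [1]) := by simp [RL, rep]
        _ =Q (rep 2 u ++ rep 1 s ++ rep 2 t) ++
              ([2] ++ (rep 0 p ++ (rep 1 (q+1) ++ rep 2 r))) := Q.appL _ (qL1 p q r)
        _ = RL (insB ⟨p, q, r+1, s, t, u⟩) := by
            simp [RL, insB, rep, List.replicate_succ']
  · -- x = 2 (c)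
    rw [show ∀ T h, insL T ⟨2, h⟩ = insC T from fun _ _ => rfl]
    apply Q.of_eq
    simp [RL, insC, rep, List.replicate_succ']
  · exact absurd hx (by omega)

/-- The empty tableau. -/
def T0 : Tab := ⟨0, 0, 0, 0, 0, 0⟩

/-- Every word is plactically congruent to the reading word of its insertion tableau. -/
lemma q_complete (l : List (Fin 3)) : Q l (RL (insW T0 l)) := by
  induction l using List.reverseRecOn with
  | nil => exact Q.refl []
  | append_singleton l x ih =>
    calc l ++ [x] =Q RL (insW T0 l) ++ [x] := Q.appR ih [x]
      _ =Q RL (insL (insW T0 l) x) := q_step _ _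
      _ = RL (insW T0 (l ++ [x])) := by rw [insW_append]; rfl

/-- Prepending a full column to a tableau. -/
def addCol (T : Tab) : Tab := ⟨T.p+1, T.q, T.r, T.s+1, T.t, T.u+1⟩

lemma insL_addCol (T : Tab) (x : Fin 3) : insL (addCol T) x = addCol (insL T x) := by
  obtain ⟨p, q, r, s, t, u⟩ := T
  rcases x with ⟨_ | (_ | (_ | xv)), hx⟩
  · rcases q with _ | q <;> rcases r with _ | r <;> rcases t with _ | t <;> rfl
  · rcases q with _ | q <;> rcases r with _ | r <;> rcases t with _ | t <;> rfl
  · rcases q with _ | q <;> rcases r with _ | r <;> rcases t with _ | t <;> rfl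
  · exact absurd hx (by omega)

lemma insW_addCol (T : Tab) (l : List (Fin 3)) :
    insW (addCol T) l = addCol (insW T l) := by
  induction l generalizing T with
  | nil => rfl
  | cons x l ih =>
    show insW (insL (addCol T) x) l = _
    rw [insL_addCol, ih]
    rfl

lemma addCol_inj {T S : Tab} (h : addCol T = addCol S) : T = S := by
  obtain ⟨p1,q1,r1,s1,t1,u1⟩ := T
  obtain ⟨p2,q2,r2,s2,t2,u2⟩ := S
  simp only [addCol, Tab.mk.injEq] at h ⊢
  omega

/-- The element `z = cba` is (left) cancellable in the plactic monoid `M`. -/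
theorem z_cancellable :
    ∀ w v : M, mk (c * b * a) * w = mk (c * b * a) * v → w = v := by
  intro w v h
  obtain ⟨x, rfl⟩ := placticCon.mk'_surjective w
  obtain ⟨y, rfl⟩ := placticCon.mk'_surjective v
  rw [show mk (c * b * a) * placticCon.mk' x = placticCon.mk' (c * b * a * x) from
        (map_mul _ _ _).symm,
      show mk (c * b * a) * placticCon.mk' y = placticCon.mk' (c * b * a * y) from
        (map_mul _ _ _).symm] at h
  have hcon : placticCon (c * b * a * x) (c * b * a * y) := (placticCon.eq).mp h
  have e : insW T0 ((c * b * a * x).toList) = insW T0 ((c * b * a * y).toList) :=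
    ins_congr hcon T0
  have ezx : insW T0 ((c * b * a * x).toList) = addCol (insW T0 x.toList) := by
    have : (c * b * a * x).toList = [2,1,0] ++ x.toList := rfl
    rw [this, insW_append]
    have : insW T0 [2,1,0] = addCol T0 := rfl
    rw [this, insW_addCol]
  have ezy : insW T0 ((c * b * a * y).toList) = addCol (insW T0 y.toList) := by
    have : (c * b * a * y).toList = [2,1,0] ++ y.toList := rfl
    rw [this, insW_append]
    have : insW T0 [2,1,0] = addCol T0 := rfl
    rw [this, insW_addCol]
  have etab : insW T0 x.toList = insW T0 y.toList := by
    have h2 : addCol (insW T0 x.toList) = addCol (insW T0 y.toList) := by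
      rw [← ezx, ← ezy]; exact e
    exact addCol_inj h2
  have hx : Q x.toList (RL (insW T0 x.toList)) := q_complete x.toList
  have hy : Q y.toList (RL (insW T0 y.toList)) := q_complete y.toList
  rw [etab] at hx
  have : placticCon x y := hx.trans hy.symm
  exact (placticCon.eq).mpr this

end Plactic
end

section
/- Every non-identity element of the monoid N1 has infinite order: for every u ∈ N1 with u ≠ 1, the map n ↦ u^n from ℕ to N1 is injective (the submonoid generated by u is infinite cyclic). -/
namespace Plactic

/-- Length homomorphism on the free monoid. -/
def L : FreeMonoid (Fin 3) →* Multiplicative ℕ :=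
  FreeMonoid.lift (fun _ => Multiplicative.ofAdd 1)

lemma L_eq (w : FreeMonoid (Fin 3)) : L w = Multiplicative.ofAdd (FreeMonoid.toList w).length := by
  induction w using FreeMonoid.recOn with
  | one => rfl
  | of_mul x xs ih =>
    rw [map_mul, ih, L, FreeMonoid.lift_eval_of, FreeMonoid.toList_of_mul]
    simp [← ofAdd_add, add_comm]

lemma plactic_le : placticCon ≤ Con.ker L := by
  rw [placticCon]
  apply Con.conGen_le.mpr
  intro x y h
  cases h <;> rfl

def L1 : M →* Multiplicative ℕ := Con.lift placticCon L plactic_le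

lemma con1_le : con1 ≤ Con.ker L1 := by
  rw [con1]
  apply Con.conGen_le.mpr
  rintro x y ⟨rfl, rfl⟩
  rfl

def L2 : N1 →* Multiplicative ℕ := Con.lift con1 L1 con1_le

/-- Every non-identity element of `N1` has infinite order. -/
theorem N1_infinite_order (u : N1) (hu : u ≠ 1) :
    Function.Injective fun n : ℕ => u ^ n := by
  obtain ⟨m, rfl⟩ := Con.mk'_surjective u
  obtain ⟨w, rfl⟩ := Con.mk'_surjective m
  have hL : L2 (con1.mk' (placticCon.mk' w)) = L w := rfl
  have hk : Multiplicative.toAdd (L w) ≠ 0 := by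
    intro h0
    apply hu
    rw [L_eq] at h0
    have : (FreeMonoid.toList w).length = 0 := h0
    have hw : w = 1 := by
      apply FreeMonoid.toList.injective
      simpa using List.length_eq_zero_iff.mp this
    rw [hw, map_one, map_one]
  intro i j hij
  simp only at hij
  have := congrArg L2 hij
  rw [map_pow, map_pow, hL] at this
  have h2 := congrArg Multiplicative.toAdd this
  rw [toAdd_pow, toAdd_pow, smul_eq_mul, smul_eq_mul] at h2
  exact Nat.eq_of_mul_eq_mul_right (Nat.pos_of_ne_zero hk) h2


end Plactic
end

section
/- Every non-identity element of the grammic monoid N2 has infinite order: for every u ∈ N2 with u ≠ 1, the map n ↦ u^n from ℕ to N2 is injective (the submonoid generated by u is infinite cyclic). -/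
namespace Plactic

/-- Length homomorphism on the free monoid. -/
def len : FreeMonoid (Fin 3) →* Multiplicative ℕ :=
  FreeMonoid.lift fun _ => Multiplicative.ofAdd 1

lemma len_eq (w : FreeMonoid (Fin 3)) : len w = Multiplicative.ofAdd w.length := by
  induction w using FreeMonoid.inductionOn with
  | one => rfl
  | of x => rfl
  | mul x xs ihx ihy =>
    rw [map_mul, ihx, ihy, ← ofAdd_add, FreeMonoid.length_mul]

def len1 : M →* Multiplicative ℕ :=
  Con.lift _ len (Con.conGen_le.2 (by rintro x y (h | h | h | h | h | h | h | h) <;> rfl))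

def len2 : N2 →* Multiplicative ℕ :=
  Con.lift _ len1 (Con.conGen_le.2 (by rintro x y ⟨rfl, rfl⟩; rfl))

/-- Every non-identity element of the grammic monoid `N2` has infinite order. -/
theorem N2_infinite_order (u : N2) (hu : u ≠ 1) :
    Function.Injective fun n : ℕ => u ^ n := by
  obtain ⟨x, rfl⟩ := Con.mk'_surjective u
  obtain ⟨w, rfl⟩ := Con.mk'_surjective x
  have hlen : w.length ≠ 0 := by
    intro h
    apply hu
    have : w = 1 := List.length_eq_zero_iff.mp h
    rw [this]
    rfl
  intro m n hmn
  have h2 : len2 ((con2.mk' (placticCon.mk' w)) ^ m) =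
      len2 ((con2.mk' (placticCon.mk' w)) ^ n) := by
    simpa using congrArg len2 hmn
  rw [map_pow, map_pow] at h2
  have hl : len2 (con2.mk' (placticCon.mk' w)) = Multiplicative.ofAdd w.length := by
    show (Con.lift _ len1 _) (con2.mk' _) = _
    change len1 (placticCon.mk' w) = _
    show (Con.lift _ len _) (placticCon.mk' _) = _
    change len w = _
    rw [len_eq]
  rw [hl] at h2
  rw [← ofAdd_nsmul, ← ofAdd_nsmul] at h2
  have := Multiplicative.ofAdd.injective h2
  simp only [smul_eq_mul] at this
  exact Nat.eq_of_mul_eq_mul_right (Nat.pos_of_ne_zero hlen) this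

end Plactic
end
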